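/- In R = k[z_0,z_1,z_2,z_3], the ideal I = (z_1^2, z_2^2, z_1z_2 − z_3^2, z_1z_3, z_2z_3) defines a zero-dimensional scheme in P^3 of degree 5, i.e. dim_k (R/I)_d = 5 for all sufficiently large d. -/

import Mathlib

open MvPolynomial

/-- The dimension of the degree-`d` graded piece of `R/I`, computed as
`dim_k R_d / (I ∩ R_d)`. -/
noncomputable def hilbertFn (k : Type*) [Field k] {σ : Type*} [Fintype σ]
    (I : Ideal (MvPolynomial σ k)) (d : ℕ) : ℕ :=
  Module.finrank k
    (↥(homogeneousSubmodule σ k d) ⧸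
      (Submodule.comap (homogeneousSubmodule σ k d).subtype (I.restrictScalars k)))

namespace Deg5Aux

variable {k : Type*} [Field k]

/-- The linear functional recording the five relevant coefficients. -/
noncomputable def Lmap (k : Type*) [Field k] (d : ℕ) :
    MvPolynomial (Fin 4) k →ₗ[k] (Fin 5 → k) :=
  LinearMap.pi fun i =>
    match i with
    | 0 => lcoeff k (Finsupp.single 0 d)
    | 1 => lcoeff k (Finsupp.single 0 (d-1) + Finsupp.single 1 1)
    | 2 => lcoeff k (Finsupp.single 0 (d-1) + Finsupp.single 2 1)
    | 3 => lcoeff k (Finsupp.single 0 (d-1) + Finsupp.single 3 1)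
    | 4 => lcoeff k (Finsupp.single 0 (d-2) + Finsupp.single 1 1 + Finsupp.single 2 1)
             + lcoeff k (Finsupp.single 0 (d-2) + Finsupp.single 3 2)

def Igens (k : Type*) [Field k] : Set (MvPolynomial (Fin 4) k) :=
  {X 1 ^ 2, X 2 ^ 2, X 1 * X 2 - X 3 ^ 2, X 1 * X 3, X 2 * X 3}

theorem Lmap_mul_gen (d : ℕ) (f g : MvPolynomial (Fin 4) k) (hg : g ∈ Igens k) :
    Lmap k d (f * g) = 0 := by
  rcases hg with hg | hg | hg | hg | hg <;> subst hg <;> funext i <;> fin_cases i <;>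
    simp [Lmap, sq, mul_sub, ← mul_assoc, coeff_mul_X', Finsupp.mem_support_iff,
      Finsupp.single_apply, Finsupp.sub_apply, Finsupp.add_apply, tsub_tsub,
      ← Finsupp.single_add, add_tsub_cancel_right]

theorem Lmap_eq_zero_of_mem (d : ℕ) {p : MvPolynomial (Fin 4) k}
    (hp : p ∈ Ideal.span (Igens k)) : Lmap k d p = 0 := by
  have key : ∀ f : MvPolynomial (Fin 4) k, Lmap k d (f * p) = 0 := by
    refine Submodule.span_induction ?_ ?_ ?_ ?_ hp
    · intro x hx f; exact Lmap_mul_gen d f x hx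
    · intro f; simp
    · intro x y _ _ hx hy f; rw [mul_add, map_add, hx, hy, add_zero]
    · intro r x _ hx f
      rw [smul_eq_mul, ← mul_assoc]; exact hx (f * r)
  simpa using key 1

theorem neA {a b : Fin 4 →₀ ℕ} (c : Fin 4) (h : a c ≠ b c) : a ≠ b := fun e => h (by rw [e])

theorem Lmap_m0 (d : ℕ) :
    Lmap k d (monomial (Finsupp.single (0 : Fin 4) d) (1:k)) = Pi.single 0 1 := by
  funext j; fin_cases j <;>
    simp only [Lmap, LinearMap.pi_apply, LinearMap.add_apply, lcoeff_apply, coeff_monomial]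
  · simp
  · rw [if_neg (neA 1 (by simp [Finsupp.single_apply]))]; simp
  · rw [if_neg (neA 2 (by simp [Finsupp.single_apply]))]; simp
  · rw [if_neg (neA 3 (by simp [Finsupp.single_apply]))]; simp
  · rw [if_neg (neA 1 (by simp [Finsupp.single_apply])),
      if_neg (neA 3 (by simp [Finsupp.single_apply]))]; simp

theorem Lmap_m1 (d : ℕ) :
    Lmap k d (monomial (Finsupp.single 0 (d-1) + Finsupp.single 1 1) (1:k)) = Pi.single 1 1 := by
  funext j; fin_cases j <;>
    simp only [Lmap, LinearMap.pi_apply, LinearMap.add_apply, lcoeff_apply, coeff_monomial]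
  · rw [if_neg (neA 1 (by simp [Finsupp.single_apply]))]; simp
  · simp
  · rw [if_neg (neA 1 (by simp [Finsupp.single_apply]))]; simp
  · rw [if_neg (neA 1 (by simp [Finsupp.single_apply]))]; simp
  · rw [if_neg (neA 2 (by simp [Finsupp.single_apply])),
      if_neg (neA 1 (by simp [Finsupp.single_apply]))]; simp

theorem Lmap_m2 (d : ℕ) :
    Lmap k d (monomial (Finsupp.single 0 (d-1) + Finsupp.single 2 1) (1:k)) = Pi.single 2 1 := by
  funext j; fin_cases j <;>
    simp only [Lmap, LinearMap.pi_apply, LinearMap.add_apply, lcoeff_apply, coeff_monomial]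
  · rw [if_neg (neA 2 (by simp [Finsupp.single_apply]))]; simp
  · rw [if_neg (neA 1 (by simp [Finsupp.single_apply]))]; simp
  · simp
  · rw [if_neg (neA 2 (by simp [Finsupp.single_apply]))]; simp
  · rw [if_neg (neA 1 (by simp [Finsupp.single_apply])),
      if_neg (neA 2 (by simp [Finsupp.single_apply]))]; simp

theorem Lmap_m3 (d : ℕ) :
    Lmap k d (monomial (Finsupp.single 0 (d-1) + Finsupp.single 3 1) (1:k)) = Pi.single 3 1 := by
  funext j; fin_cases j <;>
    simp only [Lmap, LinearMap.pi_apply, LinearMap.add_apply, lcoeff_apply, coeff_monomial]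
  · rw [if_neg (neA 3 (by simp [Finsupp.single_apply]))]; simp
  · rw [if_neg (neA 1 (by simp [Finsupp.single_apply]))]; simp
  · rw [if_neg (neA 2 (by simp [Finsupp.single_apply]))]; simp
  · simp
  · rw [if_neg (neA 1 (by simp [Finsupp.single_apply])),
      if_neg (neA 3 (by simp [Finsupp.single_apply]))]; simp

theorem Lmap_m4 (d : ℕ) :
    Lmap k d (monomial (Finsupp.single 0 (d-2) + Finsupp.single 1 1 + Finsupp.single 2 1) (1:k))
      = Pi.single 4 1 := by
  funext j; fin_cases j <;>
    simp only [Lmap, LinearMap.pi_apply, LinearMap.add_apply, lcoeff_apply, coeff_monomial]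
  · rw [if_neg (neA 1 (by simp [Finsupp.single_apply]))]; simp
  · rw [if_neg (neA 2 (by simp [Finsupp.single_apply]))]; simp
  · rw [if_neg (neA 1 (by simp [Finsupp.single_apply]))]; simp
  · rw [if_neg (neA 1 (by simp [Finsupp.single_apply]))]; simp
  · rw [if_neg (neA 1 (by simp [Finsupp.single_apply]))]; simp

theorem degFour (m : Fin 4 →₀ ℕ) : m.degree = m 0 + m 1 + m 2 + m 3 := by
  rw [Finsupp.degree_apply, Finset.sum_subset (Finset.subset_univ m.support)
    (fun x _ hx => Finsupp.notMem_support_iff.mp hx), Fin.sum_univ_four]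

theorem mrepr (m : Fin 4 →₀ ℕ) :
    m = Finsupp.single 0 (m 0) + Finsupp.single 1 (m 1) + Finsupp.single 2 (m 2)
      + Finsupp.single 3 (m 3) := by
  ext a; fin_cases a <;> simp [Finsupp.single_apply]

theorem mem_I_of_le {m : Fin 4 →₀ ℕ} (c : k) (s : Fin 4 →₀ ℕ) (hs : s ≤ m)
    (hg : monomial s (1:k) ∈ Ideal.span (Igens k)) :
    monomial m c ∈ Ideal.span (Igens k) := by
  have : monomial m c = monomial (m - s) c * monomial s 1 := by
    rw [monomial_mul, mul_one, tsub_add_cancel_of_le hs]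
  rw [this]; exact Ideal.mul_mem_left _ _ hg

theorem g11 : monomial (Finsupp.single (1 : Fin 4) 2) (1:k) ∈ Ideal.span (Igens k) := by
  rw [← X_pow_eq_monomial]; exact Ideal.subset_span (by left; rfl)

theorem g22 : monomial (Finsupp.single (2 : Fin 4) 2) (1:k) ∈ Ideal.span (Igens k) := by
  rw [← X_pow_eq_monomial]; exact Ideal.subset_span (by right; left; rfl)

theorem g13 : monomial (Finsupp.single (1:Fin 4) 1 + Finsupp.single 3 1) (1:k)
    ∈ Ideal.span (Igens k) := by
  have : monomial (Finsupp.single (1:Fin 4) 1 + Finsupp.single 3 1) (1:k) = X 1 * X 3 := by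
    rw [X, X, monomial_mul, one_mul]
  rw [this]; exact Ideal.subset_span (by right; right; right; left; rfl)

theorem g23 : monomial (Finsupp.single (2:Fin 4) 1 + Finsupp.single 3 1) (1:k)
    ∈ Ideal.span (Igens k) := by
  have : monomial (Finsupp.single (2:Fin 4) 1 + Finsupp.single 3 1) (1:k) = X 2 * X 3 := by
    rw [X, X, monomial_mul, one_mul]
  rw [this]; exact Ideal.subset_span (by right; right; right; right; rfl)

theorem g33 : monomial (Finsupp.single (3 : Fin 4) 3) (1:k) ∈ Ideal.span (Igens k) := by
  rw [← X_pow_eq_monomial]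
  have h : (X 3 : MvPolynomial (Fin 4) k) ^ 3
      = X 2 * (X 1 * X 3) - X 3 * (X 1 * X 2 - X 3 ^ 2) := by ring
  rw [h]
  exact sub_mem
    (Ideal.mul_mem_left _ _ (Ideal.subset_span (by right; right; right; left; rfl)))
    (Ideal.mul_mem_left _ _ (Ideal.subset_span (by right; right; left; rfl)))

theorem classify (d : ℕ) (hd : 2 ≤ d) (m : Fin 4 →₀ ℕ) (hm : m.degree = d) (c : k) :
    monomial m c ∈ Ideal.span (Igens k) ∨
      m = Finsupp.single 0 d ∨
      m = Finsupp.single 0 (d-1) + Finsupp.single 1 1 ∨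
      m = Finsupp.single 0 (d-1) + Finsupp.single 2 1 ∨
      m = Finsupp.single 0 (d-1) + Finsupp.single 3 1 ∨
      m = Finsupp.single 0 (d-2) + Finsupp.single 1 1 + Finsupp.single 2 1 ∨
      m = Finsupp.single 0 (d-2) + Finsupp.single 3 2 := by
  have hsum : m 0 + m 1 + m 2 + m 3 = d := by rw [← degFour, hm]
  by_cases h1 : 2 ≤ m 1
  · exact Or.inl (mem_I_of_le c _ (Finsupp.single_le_iff.mpr h1) g11)
  by_cases h2 : 2 ≤ m 2
  · exact Or.inl (mem_I_of_le c _ (Finsupp.single_le_iff.mpr h2) g22)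
  by_cases h13 : 1 ≤ m 1 ∧ 1 ≤ m 3
  · refine Or.inl (mem_I_of_le c _ ?_ g13)
    rw [Finsupp.le_def]; intro a; fin_cases a <;> simp [Finsupp.single_apply] <;> omega
  by_cases h23 : 1 ≤ m 2 ∧ 1 ≤ m 3
  · refine Or.inl (mem_I_of_le c _ ?_ g23)
    rw [Finsupp.le_def]; intro a; fin_cases a <;> simp [Finsupp.single_apply] <;> omega
  by_cases h3 : 3 ≤ m 3
  · exact Or.inl (mem_I_of_le c _ (Finsupp.single_le_iff.mpr h3) g33)
  -- remaining cases
  right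
  have e := mrepr m
  push_neg at h13 h23
  rcases (by omega : m 1 = 0 ∨ m 1 = 1) with hb | hb <;>
  rcases (by omega : m 2 = 0 ∨ m 2 = 1) with hc | hc
  · rcases (by omega : m 3 = 0 ∨ m 3 = 1 ∨ m 3 = 2) with he | he | he
    · left
      have h0 : m 0 = d := by omega
      rw [e, hb, hc, he, h0]; simp
    · right; right; right; left
      have h0 : m 0 = d - 1 := by omega
      rw [e, hb, hc, he, h0]; simp
    · right; right; right; right; right
      have h0 : m 0 = d - 2 := by omega
      rw [e, hb, hc, he, h0]; simp
  · have he : m 3 = 0 := by omega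
    right; right; left
    have h0 : m 0 = d - 1 := by omega
    rw [e, hb, hc, he, h0]; simp
  · have he : m 3 = 0 := by omega
    right; left
    have h0 : m 0 = d - 1 := by omega
    rw [e, hb, hc, he, h0]; simp
  · have he : m 3 = 0 := by omega
    right; right; right; right; left
    have h0 : m 0 = d - 2 := by omega
    rw [e, hb, hc, he, h0]; simp [add_assoc]

theorem deg_m0 (d : ℕ) : (Finsupp.single (0:Fin 4) d).degree = d := by
  rw [degFour]; simp [Finsupp.single_apply]

theorem deg_m1 (d : ℕ) (hd : 2 ≤ d) :
    (Finsupp.single (0:Fin 4) (d-1) + Finsupp.single 1 1).degree = d := by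
  rw [degFour]; simp [Finsupp.single_apply]; omega

theorem deg_m2 (d : ℕ) (hd : 2 ≤ d) :
    (Finsupp.single (0:Fin 4) (d-1) + Finsupp.single 2 1).degree = d := by
  rw [degFour]; simp [Finsupp.single_apply]; omega

theorem deg_m3 (d : ℕ) (hd : 2 ≤ d) :
    (Finsupp.single (0:Fin 4) (d-1) + Finsupp.single 3 1).degree = d := by
  rw [degFour]; simp [Finsupp.single_apply]; omega

theorem deg_m4 (d : ℕ) (hd : 2 ≤ d) :
    (Finsupp.single (0:Fin 4) (d-2) + Finsupp.single 1 1 + Finsupp.single 2 1).degree = d := by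
  rw [degFour]; simp [Finsupp.single_apply]; omega

theorem deg_m5 (d : ℕ) (hd : 2 ≤ d) :
    (Finsupp.single (0:Fin 4) (d-2) + Finsupp.single 3 2).degree = d := by
  rw [degFour]; simp [Finsupp.single_apply]; omega

/-- The hard direction: a homogeneous polynomial of degree `d ≥ 2` killed by `Lmap`
lies in the ideal. -/
theorem mem_of_Lmap_eq_zero (d : ℕ) (hd : 2 ≤ d) (p : MvPolynomial (Fin 4) k)
    (hp : p.IsHomogeneous d) (h : Lmap k d p = 0) : p ∈ Ideal.span (Igens k) := by
  have c0 : coeff (Finsupp.single 0 d) p = 0 := congrFun h 0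
  have c1 : coeff (Finsupp.single 0 (d-1) + Finsupp.single 1 1) p = 0 := congrFun h 1
  have c2 : coeff (Finsupp.single 0 (d-1) + Finsupp.single 2 1) p = 0 := congrFun h 2
  have c3 : coeff (Finsupp.single 0 (d-1) + Finsupp.single 3 1) p = 0 := congrFun h 3
  have c45 : coeff (Finsupp.single 0 (d-2) + Finsupp.single 1 1 + Finsupp.single 2 1) p
      + coeff (Finsupp.single 0 (d-2) + Finsupp.single 3 2) p = 0 := congrFun h 4
  set c : k := coeff (Finsupp.single 0 (d-2) + Finsupp.single 1 1 + Finsupp.single 2 1) p with hc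
  set w : MvPolynomial (Fin 4) k :=
    monomial (Finsupp.single 0 (d-2) + Finsupp.single 1 1 + Finsupp.single 2 1) 1
      - monomial (Finsupp.single 0 (d-2) + Finsupp.single 3 2) 1 with hwdef
  have hwI : w ∈ Ideal.span (Igens k) := by
    have hw : w = monomial (Finsupp.single 0 (d-2)) 1 * (X 1 * X 2 - X 3 ^ 2) := by
      rw [hwdef]
      simp [X, monomial_pow, Finsupp.smul_single, monomial_mul, mul_sub, add_assoc]
    rw [hw]
    exact Ideal.mul_mem_left _ _ (Ideal.subset_span (by right; right; left; rfl))
  have hwhom : w.IsHomogeneous d :=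
    (isHomogeneous_monomial _ (deg_m4 d hd)).sub (isHomogeneous_monomial _ (deg_m5 d hd))
  set q : MvPolynomial (Fin 4) k := p - c • w with hqdef
  have hqhom : q.IsHomogeneous d := by
    have : (c • w).IsHomogeneous d := by
      rw [smul_eq_C_mul]
      simpa using (isHomogeneous_C (Fin 4) c).mul hwhom
    exact hp.sub this
  -- coefficients of q at the six monomials vanish
  have e0 : coeff (Finsupp.single 0 d) q = 0 := by
    rw [hqdef, coeff_sub, coeff_smul, hwdef, coeff_sub, coeff_monomial, coeff_monomial,
      if_neg (neA 1 (by simp [Finsupp.single_apply])),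
      if_neg (neA 3 (by simp [Finsupp.single_apply])), c0]
    simp
  have e1 : coeff (Finsupp.single 0 (d-1) + Finsupp.single 1 1) q = 0 := by
    rw [hqdef, coeff_sub, coeff_smul, hwdef, coeff_sub, coeff_monomial, coeff_monomial,
      if_neg (neA 2 (by simp [Finsupp.single_apply])),
      if_neg (neA 1 (by simp [Finsupp.single_apply])), c1]
    simp
  have e2 : coeff (Finsupp.single 0 (d-1) + Finsupp.single 2 1) q = 0 := by
    rw [hqdef, coeff_sub, coeff_smul, hwdef, coeff_sub, coeff_monomial, coeff_monomial,
      if_neg (neA 1 (by simp [Finsupp.single_apply])),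
      if_neg (neA 2 (by simp [Finsupp.single_apply])), c2]
    simp
  have e3 : coeff (Finsupp.single 0 (d-1) + Finsupp.single 3 1) q = 0 := by
    rw [hqdef, coeff_sub, coeff_smul, hwdef, coeff_sub, coeff_monomial, coeff_monomial,
      if_neg (neA 1 (by simp [Finsupp.single_apply])),
      if_neg (neA 3 (by simp [Finsupp.single_apply])), c3]
    simp
  have e4 : coeff (Finsupp.single 0 (d-2) + Finsupp.single 1 1 + Finsupp.single 2 1) q = 0 := by
    rw [hqdef, coeff_sub, coeff_smul, hwdef, coeff_sub, coeff_monomial, coeff_monomial,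
      if_pos rfl, if_neg (neA 1 (by simp [Finsupp.single_apply])), ← hc]
    simp
  have e5 : coeff (Finsupp.single 0 (d-2) + Finsupp.single 3 2) q = 0 := by
    rw [hqdef, coeff_sub, coeff_smul, hwdef, coeff_sub, coeff_monomial, coeff_monomial,
      if_neg (neA 1 (by simp [Finsupp.single_apply])), if_pos rfl]
    have : coeff (Finsupp.single 0 (d-2) + Finsupp.single 3 2) p = -c := by
      rw [hc]; linear_combination c45
    rw [this]; simp
  have hqI : q ∈ Ideal.span (Igens k) := by
    rw [← support_sum_monomial_coeff q]
    refine Submodule.sum_mem _ fun m hm => ?_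
    have hmc : coeff m q ≠ 0 := mem_support_iff.mp hm
    have hdeg : m.degree = d := by
      rw [Finsupp.degree_eq_weight_one]; exact hqhom hmc
    rcases classify d hd m hdeg (coeff m q) with hI | hm' | hm' | hm' | hm' | hm' | hm'
    · exact hI
    · exact absurd (hm' ▸ e0) hmc
    · exact absurd (hm' ▸ e1) hmc
    · exact absurd (hm' ▸ e2) hmc
    · exact absurd (hm' ▸ e3) hmc
    · exact absurd (hm' ▸ e4) hmc
    · exact absurd (hm' ▸ e5) hmc
  have : p = q + c • w := by rw [hqdef, sub_add_cancel]
  rw [this]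
  exact Submodule.add_mem _ hqI (Submodule.smul_of_tower_mem _ c hwI)

end Deg5Aux

open Deg5Aux in
/-- in `R = k[z₀,z₁,z₂,z₃]`, the ideal
`I = (z₁², z₂², z₁z₂ − z₃², z₁z₃, z₂z₃)` defines a zero-dimensional subscheme of `P³`
of degree `5`:  `dim_k (R/I)_d = 5` for all sufficiently large `d`. -/
theorem degree_five_gorenstein_point (k : Type*) [Field k] :
    letI z : Fin 4 → MvPolynomial (Fin 4) k := X
    ∃ N : ℕ, ∀ d ≥ N,
      hilbertFn k (Ideal.span
        {z 1 ^ 2, z 2 ^ 2, z 1 * z 2 - z 3 ^ 2, z 1 * z 3, z 2 * z 3}) d = 5 := by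
  refine ⟨2, fun d hd => ?_⟩
  have hIg : (Ideal.span {X 1 ^ 2, X 2 ^ 2, X 1 * X 2 - X 3 ^ 2, X 1 * X 3, X 2 * X 3}
      : Ideal (MvPolynomial (Fin 4) k)) = Ideal.span (Igens k) := rfl
  rw [hilbertFn, hIg]
  set V := homogeneousSubmodule (Fin 4) k d with hV
  set φ : V →ₗ[k] (Fin 5 → k) := (Lmap k d).comp V.subtype with hφ
  have hker : LinearMap.ker φ
      = Submodule.comap V.subtype ((Ideal.span (Igens k)).restrictScalars k) := by
    ext x
    simp only [LinearMap.mem_ker, hφ, LinearMap.comp_apply, Submodule.mem_comap,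
      Submodule.coe_subtype, Submodule.restrictScalars_mem]
    constructor
    · intro hx
      exact mem_of_Lmap_eq_zero d hd x.1 x.2 hx
    · intro hx
      exact Lmap_eq_zero_of_mem d hx
  have hsurj : Function.Surjective φ := by
    intro v
    set pv : MvPolynomial (Fin 4) k := v 0 • monomial (Finsupp.single 0 d) 1
      + v 1 • monomial (Finsupp.single 0 (d-1) + Finsupp.single 1 1) 1
      + v 2 • monomial (Finsupp.single 0 (d-1) + Finsupp.single 2 1) 1
      + v 3 • monomial (Finsupp.single 0 (d-1) + Finsupp.single 3 1) 1
      + v 4 • monomial (Finsupp.single 0 (d-2) + Finsupp.single 1 1 + Finsupp.single 2 1) 1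
      with hpv
    have hmem : pv ∈ V := by
      rw [hpv]
      refine Submodule.add_mem _ (Submodule.add_mem _ (Submodule.add_mem _ (Submodule.add_mem _
        (Submodule.smul_mem _ _ ?_) (Submodule.smul_mem _ _ ?_)) (Submodule.smul_mem _ _ ?_))
        (Submodule.smul_mem _ _ ?_)) (Submodule.smul_mem _ _ ?_)
      · exact isHomogeneous_monomial _ (deg_m0 d)
      · exact isHomogeneous_monomial _ (deg_m1 d hd)
      · exact isHomogeneous_monomial _ (deg_m2 d hd)
      · exact isHomogeneous_monomial _ (deg_m3 d hd)
      · exact isHomogeneous_monomial _ (deg_m4 d hd)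
    refine ⟨⟨pv, hmem⟩, ?_⟩
    have : φ ⟨pv, hmem⟩ = Lmap k d pv := rfl
    rw [this, hpv]
    simp only [map_add, map_smul, Lmap_m0, Lmap_m1, Lmap_m2, Lmap_m3, Lmap_m4]
    funext j
    fin_cases j <;> simp [Pi.single_apply]
  have equiv1 :
      (V ⧸ Submodule.comap V.subtype ((Ideal.span (Igens k)).restrictScalars k))
        ≃ₗ[k] (V ⧸ LinearMap.ker φ) := Submodule.quotEquivOfEq _ _ hker.symm
  have equiv2 : (V ⧸ LinearMap.ker φ) ≃ₗ[k] (Fin 5 → k) :=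
    φ.quotKerEquivOfSurjective hsurj
  rw [(equiv1.trans equiv2).finrank_eq]
  simp
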